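/- Let q ∈ (0,1) and α ∈ (0,1) be real. Then the series ∑_{k=0}^{∞} k·α^k/(k)_q converges, and (α;q)_∞ · ∑_{k=0}^{∞} k·α^k/(k)_q = ∑_{i=0}^{∞} α q^i/(1 − α q^i). (Equivalently, the mean of the q-geometric distribution qGeom(α) equals γ(α) := α·(log E_q)′(α), where E_q(x) = (x;q)_∞^{−1}.) -/

import Mathlib

open Finset

/-- `(x; q)_k` : the finite q-Pochhammer symbol `∏_{i=0}^{k-1} (1 - x qⁱ)`. -/
noncomputable def qPoch (q x : ℝ) (k : ℕ) : ℝ := ∏ i ∈ Finset.range k, (1 - x * q ^ i)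

/-- `(x; q)_∞` : the infinite q-Pochhammer symbol `∏_{i=0}^{∞} (1 - x qⁱ)`. -/
noncomputable def qPochInf (q x : ℝ) : ℝ := ∏' i : ℕ, (1 - x * q ^ i)

/-- `(n)_q := (q; q)_n = ∏_{i=1}^{n} (1 - qⁱ)`. -/
noncomputable def qFac (q : ℝ) (n : ℕ) : ℝ := qPoch q q n

/-- The q-binomial coefficient `binom(n,k)_q = (n)_q / ((k)_q (n-k)_q)`. -/
noncomputable def qBinom (q : ℝ) (n k : ℕ) : ℝ := qFac q n / (qFac q k * qFac q (n - k))

namespace QGAux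

variable {q : ℝ}

lemma factor_pos (hq0 : 0 < q) (hq1 : q < 1) {x : ℝ} (hx0 : 0 ≤ x) (hx1 : x < 1) (i : ℕ) :
    0 < 1 - x * q ^ i := by
  have h1 : q ^ i ≤ 1 := pow_le_one₀ hq0.le hq1.le
  have h2 : 0 < q ^ i := pow_pos hq0 i
  nlinarith

lemma qFac_pos (hq0 : 0 < q) (hq1 : q < 1) (k : ℕ) : 0 < qFac q k := by
  unfold qFac qPoch
  exact Finset.prod_pos fun i _ => factor_pos hq0 hq1 hq0.le hq1 i

lemma summable_log (hq0 : 0 < q) (hq1 : q < 1) {x : ℝ} (hx0 : 0 ≤ x) (hx1 : x < 1) :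
    Summable (fun i : ℕ => Real.log (1 - x * q ^ i)) := by
  rw [← summable_neg_iff]
  have hgeo : Summable (fun i : ℕ => (1 - x)⁻¹ * (x * q ^ i)) :=
    ((summable_geometric_of_lt_one hq0.le hq1).mul_left x).mul_left _
  apply Summable.of_nonneg_of_le (fun i => ?_) (fun i => ?_) hgeo
  · have := factor_pos hq0 hq1 hx0 hx1 i
    have : Real.log (1 - x * q ^ i) ≤ 0 := by
      apply Real.log_nonpos (by linarith)
      nlinarith [pow_pos hq0 i]
    linarith
  · have hpos := factor_pos hq0 hq1 hx0 hx1 i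
    have h1 : q ^ i ≤ 1 := pow_le_one₀ hq0.le hq1.le
    have hle : 1 - x ≤ 1 - x * q ^ i := by nlinarith
    have := Real.log_le_sub_one_of_pos (inv_pos.mpr hpos)
    rw [Real.log_inv] at this
    have h2 : (1 - x * q ^ i)⁻¹ - 1 = (x * q ^ i) / (1 - x * q ^ i) := by
      field_simp
      ring
    rw [h2] at this
    have h3 : (x * q ^ i) / (1 - x * q ^ i) ≤ (x * q ^ i) / (1 - x) := by
      apply div_le_div_of_nonneg_left (by positivity) (by linarith) hle
    calc -Real.log (1 - x * q ^ i) ≤ (x * q ^ i) / (1 - x * q ^ i) := by linarith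
    _ ≤ (x * q ^ i) / (1 - x) := h3
    _ = (1 - x)⁻¹ * (x * q ^ i) := by ring

lemma hasProd_P (hq0 : 0 < q) (hq1 : q < 1) {x : ℝ} (hx0 : 0 ≤ x) (hx1 : x < 1) :
    HasProd (fun i : ℕ => 1 - x * q ^ i) (qPochInf q x) := by
  have := (Real.hasProd_of_hasSum_log (fun i => factor_pos hq0 hq1 hx0 hx1 i)
    (summable_log hq0 hq1 hx0 hx1).hasSum).multipliable.hasProd
  exact this

lemma P_pos (hq0 : 0 < q) (hq1 : q < 1) {x : ℝ} (hx0 : 0 ≤ x) (hx1 : x < 1) :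
    0 < qPochInf q x := by
  have := Real.rexp_tsum_eq_tprod (fun i => factor_pos hq0 hq1 hx0 hx1 i)
    (summable_log hq0 hq1 hx0 hx1)
  rw [qPochInf, ← this]
  exact Real.exp_pos _

lemma P_le_one (hq0 : 0 < q) (hq1 : q < 1) {x : ℝ} (hx0 : 0 ≤ x) (hx1 : x < 1) :
    qPochInf q x ≤ 1 := by
  apply le_of_tendsto (hasProd_P hq0 hq1 hx0 hx1)
  filter_upwards with s
  apply Finset.prod_le_one (fun i _ => (factor_pos hq0 hq1 hx0 hx1 i).le)
  intro i _
  nlinarith [pow_pos hq0 i]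

lemma P_ge (hq0 : 0 < q) (hq1 : q < 1) {x : ℝ} (hx0 : 0 ≤ x) (hx1 : x < 1) :
    1 - x / (1 - q) ≤ qPochInf q x := by
  apply ge_of_tendsto ((hasProd_P hq0 hq1 hx0 hx1).tendsto_prod_nat)
  filter_upwards with n
  have key : ∀ m : ℕ, 1 - ∑ i ∈ Finset.range m, x * q ^ i ≤ ∏ i ∈ Finset.range m, (1 - x * q ^ i)
      ∧ ∏ i ∈ Finset.range m, (1 - x * q ^ i) ≤ 1 := by
    intro m
    induction m with
    | zero => simp
    | succ n ih =>
      obtain ⟨ih1, ih2⟩ := ih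
      rw [Finset.prod_range_succ, Finset.sum_range_succ]
      have hf := factor_pos hq0 hq1 hx0 hx1 n
      have hxq : 0 ≤ x * q ^ n := by positivity
      constructor
      · nlinarith
      · nlinarith
  have hsum : ∑ i ∈ Finset.range n, x * q ^ i ≤ x / (1 - q) := by
    rw [← Finset.mul_sum]
    rw [geom_sum_eq (by linarith)]
    have hqn : 0 ≤ 1 - q ^ n := by
      have := pow_le_one₀ hq0.le hq1.le (n := n); linarith
    rw [div_eq_mul_inv x]
    have h1q : (0:ℝ) < 1 - q := by linarith
    have : (q ^ n - 1) / (q - 1) = (1 - q ^ n) / (1 - q) := by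
      rw [div_eq_div_iff (by linarith) (by linarith)]; ring
    rw [this]
    have : (1 - q ^ n) / (1 - q) ≤ (1-q)⁻¹ := by
      rw [← one_div]
      gcongr
      nlinarith [pow_pos hq0 n]
    nlinarith
  linarith [(key n).1]


noncomputable def Fq (q x : ℝ) : ℝ := ∑' k : ℕ, x ^ k / qFac q k
noncomputable def Sq (q x : ℝ) : ℝ := ∑' k : ℕ, (k : ℝ) * x ^ k / qFac q k

lemma qFac_ge (hq0 : 0 < q) (hq1 : q < 1) (k : ℕ) : qPochInf q q ≤ qFac q k := by
  have hP := (hasProd_P hq0 hq1 hq0.le hq1).tendsto_prod_nat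
  apply le_of_tendsto hP
  filter_upwards [Filter.eventually_ge_atTop k] with n hn
  have : ∏ i ∈ Finset.range n, (1 - q * q ^ i)
      = (∏ i ∈ Finset.range k, (1 - q * q ^ i)) * ∏ i ∈ Finset.Ico k n, (1 - q * q ^ i) := by
    rw [← Finset.prod_range_mul_prod_Ico _ hn]
  rw [this]
  have h1 : ∏ i ∈ Finset.Ico k n, (1 - q * q ^ i) ≤ 1 := by
    apply Finset.prod_le_one (fun i _ => (factor_pos hq0 hq1 hq0.le hq1 i).le)
    intro i _
    nlinarith [pow_pos hq0 i]
  have h2 : 0 < ∏ i ∈ Finset.range k, (1 - q * q ^ i) := qFac_pos hq0 hq1 k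
  calc (∏ i ∈ Finset.range k, (1 - q * q ^ i)) * ∏ i ∈ Finset.Ico k n, (1 - q * q ^ i)
      ≤ (∏ i ∈ Finset.range k, (1 - q * q ^ i)) * 1 := by
        apply mul_le_mul_of_nonneg_left h1 h2.le
    _ = qFac q k := by rw [mul_one]; rfl

lemma summable_Fq (hq0 : 0 < q) (hq1 : q < 1) {x : ℝ} (hx : |x| < 1) :
    Summable (fun k : ℕ => x ^ k / qFac q k) := by
  have hc : 0 < qPochInf q q := P_pos hq0 hq1 hq0.le hq1
  apply Summable.of_norm_bounded (g := fun k => (qPochInf q q)⁻¹ * |x| ^ k)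
    ((summable_geometric_of_lt_one (abs_nonneg x) hx).mul_left _)
  intro k
  have hk := qFac_pos hq0 hq1 k
  rw [norm_div, Real.norm_eq_abs, Real.norm_eq_abs, abs_pow, abs_of_pos hk]
  rw [div_eq_inv_mul]
  apply mul_le_mul_of_nonneg_right _ (by positivity)
  exact inv_anti₀ hc (qFac_ge hq0 hq1 k)

lemma summable_Sq (hq0 : 0 < q) (hq1 : q < 1) {x : ℝ} (hx : |x| < 1) :
    Summable (fun k : ℕ => (k : ℝ) * x ^ k / qFac q k) := by
  have hc : 0 < qPochInf q q := P_pos hq0 hq1 hq0.le hq1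
  have hgeo : Summable (fun k : ℕ => (k : ℝ) * |x| ^ k) := by
    have := summable_pow_mul_geometric_of_norm_lt_one (R := ℝ) 1 (r := |x|)
      (by rwa [Real.norm_eq_abs, abs_abs])
    simpa using this
  apply Summable.of_norm_bounded (g := fun k : ℕ => (qPochInf q q)⁻¹ * ((k : ℝ) * |x| ^ k))
    (hgeo.mul_left _)
  intro k
  have hk := qFac_pos hq0 hq1 k
  rw [norm_div, Real.norm_eq_abs, Real.norm_eq_abs, abs_mul, abs_pow, abs_of_pos hk,
    Nat.abs_cast, div_eq_inv_mul]
  apply mul_le_mul_of_nonneg_right _ (by positivity)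
  exact inv_anti₀ hc (qFac_ge hq0 hq1 k)

lemma qFac_succ (k : ℕ) : qFac q (k + 1) = qFac q k * (1 - q ^ (k+1)) := by
  unfold qFac qPoch
  rw [Finset.prod_range_succ, ← pow_succ']

lemma Fq_func (hq0 : 0 < q) (hq1 : q < 1) {x : ℝ} (hx0 : 0 ≤ x) (hx1 : x < 1) :
    (1 - x) * Fq q x = Fq q (q * x) := by
  have hx' : |x| < 1 := by rwa [abs_of_nonneg hx0]
  have hqx' : |q * x| < 1 := by
    rw [abs_of_nonneg (by positivity)]; nlinarith
  have hs1 := summable_Fq hq0 hq1 hx'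
  have hs2 := summable_Fq hq0 hq1 hqx'
  have hpow : ∀ k : ℕ, (1:ℝ) - q ^ (k+1) ≠ 0 := by
    intro k
    have h1 : q ^ (k+1) ≤ q := by
      calc q ^ (k+1) = q ^ k * q := pow_succ q k
      _ ≤ 1 * q := by nlinarith [pow_le_one₀ hq0.le hq1.le (n := k)]
      _ = q := one_mul q
    linarith
  have key : Fq q x - Fq q (q * x) = x * Fq q x := by
    rw [Fq, Fq, ← Summable.tsum_sub hs1 hs2]
    rw [Summable.tsum_eq_zero_add (hs1.sub hs2)]
    have h0 : x ^ 0 / qFac q 0 - (q * x) ^ 0 / qFac q 0 = 0 := by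
      simp [qFac, qPoch]
    rw [h0, zero_add]
    have hterm : ∀ k : ℕ, x ^ (k+1) / qFac q (k+1) - (q * x) ^ (k+1) / qFac q (k+1)
        = x * (x ^ k / qFac q k) := by
      intro k
      have hk := (qFac_pos hq0 hq1 k).ne'
      have hnum : x ^ (k+1) - (q * x) ^ (k+1) = x ^ (k+1) * (1 - q ^ (k+1)) := by
        rw [mul_pow]; ring
      rw [qFac_succ, div_sub_div_same, hnum, mul_div_mul_right _ _ (hpow k),
        pow_succ', mul_div_assoc]
    rw [tsum_congr hterm, tsum_mul_left, ← Fq]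
  linarith [key]

lemma Sq_func (hq0 : 0 < q) (hq1 : q < 1) {x : ℝ} (hx0 : 0 ≤ x) (hx1 : x < 1) :
    (1 - x) * Sq q x = Sq q (q * x) + x * Fq q x := by
  have hx' : |x| < 1 := by rwa [abs_of_nonneg hx0]
  have hqx' : |q * x| < 1 := by
    rw [abs_of_nonneg (by positivity)]; nlinarith
  have hs1 := summable_Sq hq0 hq1 hx'
  have hs2 := summable_Sq hq0 hq1 hqx'
  have hsF := summable_Fq hq0 hq1 hx'
  have key : Sq q x - Sq q (q * x) = x * Sq q x + x * Fq q x := by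
    rw [Sq, Sq, ← Summable.tsum_sub hs1 hs2]
    rw [Summable.tsum_eq_zero_add (hs1.sub hs2)]
    have h0 : (0:ℝ) * x ^ 0 / qFac q 0 - (0:ℝ) * (q * x) ^ 0 / qFac q 0 = 0 := by ring
    simp only [Nat.cast_zero, h0, zero_add]
    have hterm : ∀ k : ℕ, ((k:ℝ)+1) * x ^ (k+1) / qFac q (k+1)
        - ((k:ℝ)+1) * (q * x) ^ (k+1) / qFac q (k+1)
        = x * ((k:ℝ) * x ^ k / qFac q k) + x * (x ^ k / qFac q k) := by
      intro k
      have hk := (qFac_pos hq0 hq1 k).ne'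
      have h1 : q ^ (k+1) ≤ q := by
        calc q ^ (k+1) = q ^ k * q := pow_succ q k
        _ ≤ 1 * q := by nlinarith [pow_le_one₀ hq0.le hq1.le (n := k)]
        _ = q := one_mul q
      have hq' : (1:ℝ) - q ^ (k+1) ≠ 0 := by linarith
      have hnum : ((k:ℝ)+1) * x ^ (k+1) - ((k:ℝ)+1) * (q * x) ^ (k+1)
          = (((k:ℝ)+1) * x ^ (k+1)) * (1 - q ^ (k+1)) := by rw [mul_pow]; ring
      rw [qFac_succ, div_sub_div_same, hnum, mul_div_mul_right _ _ hq']
      field_simp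
      ring
    have hcast : ∀ k : ℕ, ((k+1 : ℕ) : ℝ) * x ^ (k+1) / qFac q (k+1)
        - ((k+1 : ℕ) : ℝ) * (q * x) ^ (k+1) / qFac q (k+1)
        = x * ((k:ℝ) * x ^ k / qFac q k) + x * (x ^ k / qFac q k) := by
      intro k; push_cast; exact hterm k
    rw [tsum_congr hcast, Summable.tsum_add (hs1.mul_left x) (hsF.mul_left x),
      tsum_mul_left, tsum_mul_left, ← Sq, ← Fq]
  linarith [key]

lemma P_func (hq0 : 0 < q) (hq1 : q < 1) {x : ℝ} (hx0 : 0 ≤ x) (hx1 : x < 1) :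
    qPochInf q x = (1 - x) * qPochInf q (q * x) := by
  have hqx0 : 0 ≤ q * x := by positivity
  have hqx1 : q * x < 1 := by nlinarith
  have hm : Multipliable (fun n : ℕ => 1 - x * q ^ (n + 1)) := by
    have := (hasProd_P hq0 hq1 hqx0 hqx1).multipliable
    apply this.congr
    intro n
    rw [pow_succ']
    ring
  have h2 := tprod_eq_zero_mul' (f := fun n : ℕ => 1 - x * q ^ n) hm
  simp only [pow_zero, mul_one] at h2
  rw [qPochInf, h2]
  congr 1
  rw [qPochInf]
  apply tprod_congr
  intro n
  rw [pow_succ']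
  ring

lemma Fq_ge_one (hq0 : 0 < q) (hq1 : q < 1) {y : ℝ} (hy0 : 0 ≤ y) (hy1 : y < 1) :
    1 ≤ Fq q y := by
  have hs := summable_Fq hq0 hq1 (by rwa [abs_of_nonneg hy0])
  have h0 : y ^ 0 / qFac q 0 = 1 := by simp [qFac, qPoch]
  rw [Fq, ← h0]
  apply Summable.le_tsum hs 0
  intro j _
  have := qFac_pos hq0 hq1 j
  positivity

lemma Fq_le (hq0 : 0 < q) (hq1 : q < 1) {x y : ℝ} (hx1 : x < 1) (hy0 : 0 ≤ y) (hyx : y ≤ x) :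
    Fq q y ≤ 1 + y * ((qPochInf q q)⁻¹ * (1 - x)⁻¹) := by
  have hx0 : 0 ≤ x := le_trans hy0 hyx
  have hy1 : y < 1 := lt_of_le_of_lt hyx hx1
  have hc := P_pos hq0 hq1 hq0.le hq1
  have hs := summable_Fq hq0 hq1 (x := y) (by rwa [abs_of_nonneg hy0])
  rw [Fq, Summable.tsum_eq_zero_add hs]
  have h0 : y ^ 0 / qFac q 0 = 1 := by simp [qFac, qPoch]
  rw [h0]
  have hsr : Summable (fun k : ℕ => y * ((qPochInf q q)⁻¹ * x ^ k)) :=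
    (((summable_geometric_of_lt_one hx0 hx1).mul_left _).mul_left _)
  have hle : ∀ k : ℕ, y ^ (k+1) / qFac q (k+1) ≤ y * ((qPochInf q q)⁻¹ * x ^ k) := by
    intro k
    have hf := qFac_pos hq0 hq1 (k+1)
    have hg := qFac_ge hq0 hq1 (k+1)
    have h1 : y ^ (k+1) ≤ y * x ^ k := by
      rw [pow_succ']
      exact mul_le_mul_of_nonneg_left (pow_le_pow_left₀ hy0 hyx k) hy0
    have h2 : (qFac q (k+1))⁻¹ ≤ (qPochInf q q)⁻¹ := inv_anti₀ hc hg
    calc y ^ (k+1) / qFac q (k+1) = y ^ (k+1) * (qFac q (k+1))⁻¹ := div_eq_mul_inv _ _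
      _ ≤ (y * x ^ k) * (qPochInf q q)⁻¹ := by
          apply mul_le_mul h1 h2 (by positivity) (by positivity)
      _ = y * ((qPochInf q q)⁻¹ * x ^ k) := by ring
  have hs' : Summable (fun k : ℕ => y ^ (k+1) / qFac q (k+1)) :=
    (summable_nat_add_iff (f := fun k : ℕ => y ^ k / qFac q k) 1).2 hs
  have := Summable.tsum_le_tsum hle hs' hsr
  rw [tsum_mul_left, tsum_mul_left, tsum_geometric_of_lt_one hx0 hx1] at this
  linarith

lemma Sq_nonneg (hq0 : 0 < q) (hq1 : q < 1) {y : ℝ} (hy0 : 0 ≤ y) : 0 ≤ Sq q y := by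
  apply tsum_nonneg
  intro k
  have := qFac_pos hq0 hq1 k
  positivity

lemma Sq_le (hq0 : 0 < q) (hq1 : q < 1) {x y : ℝ} (hx1 : x < 1) (hy0 : 0 ≤ y) (hyx : y ≤ x) :
    Sq q y ≤ y * ∑' k : ℕ, ((k:ℝ) + 1) * x ^ k * (qPochInf q q)⁻¹ := by
  have hx0 : 0 ≤ x := le_trans hy0 hyx
  have hy1 : y < 1 := lt_of_le_of_lt hyx hx1
  have hc := P_pos hq0 hq1 hq0.le hq1
  have hs := summable_Sq hq0 hq1 (x := y) (by rwa [abs_of_nonneg hy0])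
  have hsx : Summable (fun k : ℕ => ((k:ℝ) + 1) * x ^ k) := by
    have h1 : Summable (fun k : ℕ => (k:ℝ) * x ^ k) := by
      have := summable_pow_mul_geometric_of_norm_lt_one (R := ℝ) 1 (r := x)
        (by rwa [Real.norm_eq_abs, abs_of_nonneg hx0])
      simpa using this
    have h2 := summable_geometric_of_lt_one hx0 hx1
    apply (h1.add h2).congr
    intro k; ring
  have hsr : Summable (fun k : ℕ => y * (((k:ℝ) + 1) * x ^ k * (qPochInf q q)⁻¹)) :=
    ((hsx.mul_right _).mul_left _)
  rw [Sq, Summable.tsum_eq_zero_add hs]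
  have h0 : (0:ℕ) • y = 0 := by simp
  simp only [Nat.cast_zero, zero_mul, pow_zero, zero_div, zero_add]
  have hle : ∀ k : ℕ, ((k+1 : ℕ):ℝ) * y ^ (k+1) / qFac q (k+1)
      ≤ y * (((k:ℝ) + 1) * x ^ k * (qPochInf q q)⁻¹) := by
    intro k
    have hf := qFac_pos hq0 hq1 (k+1)
    have hg := qFac_ge hq0 hq1 (k+1)
    have h1 : y ^ (k+1) ≤ y * x ^ k := by
      rw [pow_succ']
      exact mul_le_mul_of_nonneg_left (pow_le_pow_left₀ hy0 hyx k) hy0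
    have h2 : (qFac q (k+1))⁻¹ ≤ (qPochInf q q)⁻¹ := inv_anti₀ hc hg
    push_cast
    calc ((k:ℝ)+1) * y ^ (k+1) / qFac q (k+1)
        = (((k:ℝ)+1) * y ^ (k+1)) * (qFac q (k+1))⁻¹ := div_eq_mul_inv _ _
      _ ≤ (((k:ℝ)+1) * (y * x ^ k)) * (qPochInf q q)⁻¹ := by
          apply mul_le_mul ?_ h2 (by positivity) (by positivity)
          have hk0 : (0:ℝ) ≤ (k:ℝ)+1 := by positivity
          exact mul_le_mul_of_nonneg_left h1 hk0
      _ = y * (((k:ℝ) + 1) * x ^ k * (qPochInf q q)⁻¹) := by ring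
  have hs' : Summable (fun k : ℕ => ((k+1:ℕ):ℝ) * y ^ (k+1) / qFac q (k+1)) :=
    (summable_nat_add_iff (f := fun k : ℕ => (k:ℝ) * y ^ k / qFac q k) 1).2 hs
  have := Summable.tsum_le_tsum hle hs' hsr
  rw [tsum_mul_left] at this
  exact this

lemma euler_step (hq0 : 0 < q) (hq1 : q < 1) {y : ℝ} (hy0 : 0 < y) (hy1 : y < 1) :
    qPochInf q y * Fq q y = qPochInf q (q * y) * Fq q (q * y) := by
  have e1 := P_func hq0 hq1 hy0.le hy1
  have e2 := Fq_func hq0 hq1 hy0.le hy1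
  rw [e1, ← e2]
  ring

lemma euler (hq0 : 0 < q) (hq1 : q < 1) {x : ℝ} (hx0 : 0 < x) (hx1 : x < 1) :
    qPochInf q x * Fq q x = 1 := by
  have hmem : ∀ n : ℕ, 0 < q ^ n * x ∧ q ^ n * x ≤ x := by
    intro n
    constructor
    · positivity
    · have := pow_le_one₀ hq0.le hq1.le (n := n)
      nlinarith
  have hiter : ∀ n : ℕ, qPochInf q x * Fq q x
      = qPochInf q (q ^ n * x) * Fq q (q ^ n * x) := by
    intro n
    induction n with
    | zero => simp
    | succ n ih =>
      rw [ih, euler_step hq0 hq1 (hmem n).1 (lt_of_le_of_lt (hmem n).2 hx1)]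
      congr 2 <;> (rw [pow_succ']; ring)
  have hu : Filter.Tendsto (fun n : ℕ => q ^ n * x) Filter.atTop (nhds 0) := by
    have := (tendsto_pow_atTop_nhds_zero_of_lt_one hq0.le hq1).mul_const x
    simpa using this
  have hP : Filter.Tendsto (fun n : ℕ => qPochInf q (q ^ n * x)) Filter.atTop (nhds 1) := by
    apply tendsto_of_tendsto_of_tendsto_of_le_of_le
      (g := fun n : ℕ => 1 - (q ^ n * x) / (1 - q)) (h := fun _ : ℕ => (1:ℝ))
    · have := ((hu.div_const (1 - q)).const_sub 1)
      simpa using this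
    · exact tendsto_const_nhds
    · intro n
      exact P_ge hq0 hq1 (hmem n).1.le (lt_of_le_of_lt (hmem n).2 hx1)
    · intro n
      exact P_le_one hq0 hq1 (hmem n).1.le (lt_of_le_of_lt (hmem n).2 hx1)
  have hF : Filter.Tendsto (fun n : ℕ => Fq q (q ^ n * x)) Filter.atTop (nhds 1) := by
    apply tendsto_of_tendsto_of_tendsto_of_le_of_le
      (g := fun _ : ℕ => (1:ℝ))
      (h := fun n : ℕ => 1 + (q ^ n * x) * ((qPochInf q q)⁻¹ * (1 - x)⁻¹))
    · exact tendsto_const_nhds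
    · have := (hu.mul_const ((qPochInf q q)⁻¹ * (1 - x)⁻¹)).const_add 1
      simpa using this
    · intro n
      exact Fq_ge_one hq0 hq1 (hmem n).1.le (lt_of_le_of_lt (hmem n).2 hx1)
    · intro n
      exact Fq_le hq0 hq1 hx1 (hmem n).1.le (hmem n).2
  have hconst : Filter.Tendsto (fun n : ℕ => qPochInf q (q ^ n * x) * Fq q (q ^ n * x))
      Filter.atTop (nhds (qPochInf q x * Fq q x)) := by
    have : (fun n : ℕ => qPochInf q (q ^ n * x) * Fq q (q ^ n * x))
        = fun _ : ℕ => qPochInf q x * Fq q x := by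
      funext n; exact (hiter n).symm
    rw [this]
    exact tendsto_const_nhds
  have := tendsto_nhds_unique hconst (hP.mul hF)
  simpa using this

lemma G_step (hq0 : 0 < q) (hq1 : q < 1) {y : ℝ} (hy0 : 0 < y) (hy1 : y < 1) :
    qPochInf q y * Sq q y = qPochInf q (q * y) * Sq q (q * y) + y * (1 - y)⁻¹ := by
  have hqy0 : 0 < q * y := by positivity
  have hqy1 : q * y < 1 := by nlinarith
  have e1 := P_func hq0 hq1 hy0.le hy1
  have e2 := Sq_func hq0 hq1 hy0.le hy1
  have e3 := Fq_func hq0 hq1 hy0.le hy1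
  have e4 := euler hq0 hq1 hqy0 hqy1
  have h5 : qPochInf q (q * y) * Fq q y = (1 - y)⁻¹ := by
    have h6 : (qPochInf q (q * y) * Fq q y) * (1 - y) = 1 := by
      rw [mul_comm (qPochInf q (q * y)) (Fq q y), mul_assoc, mul_comm (qPochInf q (q*y)) (1 - y)]
      rw [← mul_assoc, mul_comm (Fq q y) (1 - y), e3]
      rw [mul_comm]
      exact e4
    exact eq_inv_of_mul_eq_one_left h6
  linear_combination Sq q y * e1 + qPochInf q (q * y) * e2 + y * h5

lemma telescope (hq0 : 0 < q) (hq1 : q < 1) {x : ℝ} (hx0 : 0 < x) (hx1 : x < 1) (n : ℕ) :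
    qPochInf q x * Sq q x
      = (∑ i ∈ Finset.range n, x * q ^ i / (1 - x * q ^ i))
        + qPochInf q (q ^ n * x) * Sq q (q ^ n * x) := by
  induction n with
  | zero => simp
  | succ n ih =>
    have hy0 : 0 < q ^ n * x := by positivity
    have hy1 : q ^ n * x < 1 := by
      have := pow_le_one₀ hq0.le hq1.le (n := n)
      nlinarith
    have hstep := G_step hq0 hq1 hy0 hy1
    rw [Finset.sum_range_succ, ih, hstep]
    have h1 : q * (q ^ n * x) = q ^ (n+1) * x := by rw [pow_succ']; ring
    rw [h1]
    have h2 : (q ^ n * x) * (1 - q ^ n * x)⁻¹ = x * q ^ n / (1 - x * q ^ n) := by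
      rw [mul_comm x (q ^ n), div_eq_mul_inv]
    rw [h2]
    ring

end QGAux

/-- **Mean of the q-geometric distribution.** For `q, α ∈ (0,1)`, the series
`∑_k k αᵏ/(k)_q` converges and `(α;q)_∞ ∑_k k αᵏ/(k)_q = ∑_i α qⁱ/(1 - α qⁱ)`;
i.e. the mean of `qGeom(α)` is `γ(α) = α (log E_q)'(α)`, where `E_q(x) = (x;q)_∞⁻¹`. -/
theorem qgeom_mean (q α : ℝ) (hq : q ∈ Set.Ioo (0 : ℝ) 1) (hα : α ∈ Set.Ioo (0 : ℝ) 1) :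
    Summable (fun k : ℕ => (k : ℝ) * α ^ k / qFac q k) ∧
    qPochInf q α * (∑' k : ℕ, (k : ℝ) * α ^ k / qFac q k)
      = ∑' i : ℕ, α * q ^ i / (1 - α * q ^ i) := by

  obtain ⟨hq0, hq1⟩ := hq
  obtain ⟨ha0, ha1⟩ := hα
  have hsum := QGAux.summable_Sq hq0 hq1 (x := α) (by rwa [abs_of_nonneg ha0.le])
  refine ⟨hsum, ?_⟩
  have htsum : (∑' k : ℕ, (k : ℝ) * α ^ k / qFac q k) = QGAux.Sq q α := rfl
  rw [htsum]
  -- summability of the target series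
  have hterm_nonneg : ∀ i : ℕ, 0 ≤ α * q ^ i / (1 - α * q ^ i) := by
    intro i
    have := QGAux.factor_pos hq0 hq1 ha0.le ha1 i
    positivity
  have htsummable : Summable (fun i : ℕ => α * q ^ i / (1 - α * q ^ i)) := by
    apply Summable.of_nonneg_of_le hterm_nonneg (fun i => ?_)
      (((summable_geometric_of_lt_one hq0.le hq1).mul_left α).mul_left (1 - α)⁻¹)
    have hfi := QGAux.factor_pos hq0 hq1 ha0.le ha1 i
    have hle : 1 - α ≤ 1 - α * q ^ i := by
      have h1 : q ^ i ≤ 1 := pow_le_one₀ hq0.le hq1.le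
      nlinarith
    calc α * q ^ i / (1 - α * q ^ i) ≤ α * q ^ i / (1 - α) :=
          div_le_div_of_nonneg_left (by positivity) (by linarith) hle
      _ = (1 - α)⁻¹ * (α * q ^ i) := by ring
  -- remainder tends to zero
  have hu : Filter.Tendsto (fun n : ℕ => q ^ n * α) Filter.atTop (nhds 0) := by
    have := (tendsto_pow_atTop_nhds_zero_of_lt_one hq0.le hq1).mul_const α
    simpa using this
  have hmem : ∀ n : ℕ, 0 < q ^ n * α ∧ q ^ n * α ≤ α := by
    intro n
    refine ⟨by positivity, ?_⟩
    have := pow_le_one₀ hq0.le hq1.le (n := n)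
    nlinarith
  have hrem : Filter.Tendsto (fun n : ℕ => qPochInf q (q ^ n * α) * QGAux.Sq q (q ^ n * α))
      Filter.atTop (nhds 0) := by
    apply tendsto_of_tendsto_of_tendsto_of_le_of_le
      (g := fun _ : ℕ => (0:ℝ))
      (h := fun n : ℕ => (q ^ n * α) * ∑' k : ℕ, ((k:ℝ) + 1) * α ^ k * (qPochInf q q)⁻¹)
    · exact tendsto_const_nhds
    · have := hu.mul_const (∑' k : ℕ, ((k:ℝ) + 1) * α ^ k * (qPochInf q q)⁻¹)
      simpa using this
    · intro n
      have h1 := QGAux.P_pos hq0 hq1 (hmem n).1.le (lt_of_le_of_lt (hmem n).2 ha1)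
      have h2 := QGAux.Sq_nonneg hq0 hq1 (hmem n).1.le
      positivity
    · intro n
      have h1 := QGAux.P_le_one hq0 hq1 (hmem n).1.le (lt_of_le_of_lt (hmem n).2 ha1)
      have h2 := QGAux.Sq_nonneg hq0 hq1 (hmem n).1.le
      have h3 := QGAux.Sq_le hq0 hq1 ha1 (hmem n).1.le (hmem n).2
      have h4 := QGAux.P_pos hq0 hq1 (hmem n).1.le (lt_of_le_of_lt (hmem n).2 ha1)
      calc qPochInf q (q ^ n * α) * QGAux.Sq q (q ^ n * α)
          ≤ 1 * QGAux.Sq q (q ^ n * α) := mul_le_mul_of_nonneg_right h1 h2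
        _ = QGAux.Sq q (q ^ n * α) := one_mul _
        _ ≤ (q ^ n * α) * ∑' k : ℕ, ((k:ℝ) + 1) * α ^ k * (qPochInf q q)⁻¹ := h3
  -- partial sums tend to qPochInf q α * Sq q α
  have hpartial : Filter.Tendsto
      (fun n : ℕ => ∑ i ∈ Finset.range n, α * q ^ i / (1 - α * q ^ i))
      Filter.atTop (nhds (qPochInf q α * QGAux.Sq q α)) := by
    have heq : (fun n : ℕ => ∑ i ∈ Finset.range n, α * q ^ i / (1 - α * q ^ i))
        = fun n : ℕ => qPochInf q α * QGAux.Sq q α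
          - qPochInf q (q ^ n * α) * QGAux.Sq q (q ^ n * α) := by
      funext n
      have := QGAux.telescope hq0 hq1 ha0 ha1 n
      linarith
    rw [heq]
    have := (tendsto_const_nhds (x := qPochInf q α * QGAux.Sq q α)
      (f := Filter.atTop (α := ℕ))).sub hrem
    simpa using this
  have hpartial2 := htsummable.hasSum.tendsto_sum_nat
  exact tendsto_nhds_unique hpartial hpartial2
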